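/- An inflexible assemblage is an extreme point of the set of all no-signaling assemblages: if Σ = {p_{a|x}|ψ_{a|x}⟩⟨ψ_{a|x}|} is an assemblage of pure states such that every no-signaling assemblage Σ' = {q_{a|x}|ψ_{a|x}⟩⟨ψ_{a|x}|} built from the same pure states (with q_{a|x} = 0 whenever p_{a|x} = 0) equals Σ, then Σ cannot be written as a nontrivial convex combination of two distinct no-signaling assemblages. -/

import Mathlib

open Matrix ComplexOrder

noncomputable section

/-- Rank-one operator `|v⟩⟨v|`. -/
def proj {α : Type*} (v : α → ℂ) : Matrix α α ℂ :=
  Matrix.of fun i j => v i * (starRingEnd ℂ) (v j)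

/-- A no-signaling assemblage: positive semidefinite members summing, for every
setting, to a common density matrix. -/
def IsNSA {n : ℕ} {A X : Type*} [Fintype A]
    (σ : A → X → Matrix (Fin n) (Fin n) ℂ) : Prop :=
  (∀ a x, (σ a x).PosSemidef) ∧
  ∃ ρ : Matrix (Fin n) (Fin n) ℂ, ρ.PosSemidef ∧ ρ.trace = 1 ∧ ∀ x, ∑ a, σ a x = ρ

lemma proj_mulVec {n : ℕ} (ψ v : Fin n → ℂ) :
    proj ψ *ᵥ v = (star ψ ⬝ᵥ v) • ψ := by
  ext i
  simp only [proj, mulVec, dotProduct, of_apply, Pi.smul_apply, smul_eq_mul,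
    Pi.star_apply, Complex.star_def]
  rw [Finset.sum_mul]
  exact Finset.sum_congr rfl fun j _ => by ring

lemma trace_proj {n : ℕ} (ψ : Fin n → ℂ)
    (hψ : ∑ i, (starRingEnd ℂ) (ψ i) * ψ i = 1) :
    (proj ψ).trace = 1 := by
  rw [← hψ]
  simp only [trace, diag, proj, of_apply]
  exact Finset.sum_congr rfl fun j _ => by ring

lemma psd_smul {n : ℕ} {M : Matrix (Fin n) (Fin n) ℂ} (hM : M.PosSemidef)
    {r : ℝ} (hr : 0 ≤ r) : ((r : ℂ) • M).PosSemidef := by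
  refine Matrix.PosSemidef.of_dotProduct_mulVec_nonneg ?_ ?_
  · unfold Matrix.IsHermitian
    rw [conjTranspose_smul, hM.1]
    congr 1
    simp [Complex.star_def]
  · intro v
    rw [smul_mulVec, dotProduct_smul, smul_eq_mul]
    exact mul_nonneg (by exact_mod_cast hr) (hM.dotProduct_mulVec_nonneg v)

lemma rankone_part {n : ℕ} (ψ : Fin n → ℂ)
    (hψ : star ψ ⬝ᵥ ψ = 1)
    {M N : Matrix (Fin n) (Fin n) ℂ} (hM : M.PosSemidef) (hN : N.PosSemidef)
    (c : ℂ) (h : M + N = c • proj ψ) :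
    ∃ r : ℝ, 0 ≤ r ∧ M = (r : ℂ) • proj ψ := by
  classical
  -- vectors orthogonal to ψ are killed by M
  have hMv : ∀ v, star ψ ⬝ᵥ v = 0 → M *ᵥ v = 0 := by
    intro v hv
    have h0 : star v ⬝ᵥ (M + N) *ᵥ v = 0 := by
      rw [h, smul_mulVec, proj_mulVec, hv, zero_smul, smul_zero, dotProduct_zero]
    rw [add_mulVec, dotProduct_add] at h0
    have hMvv := hM.dotProduct_mulVec_nonneg v
    have hNvv := hN.dotProduct_mulVec_nonneg v
    have hz : star v ⬝ᵥ M *ᵥ v = 0 := by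
      refine le_antisymm ?_ hMvv
      have : star v ⬝ᵥ M *ᵥ v = -(star v ⬝ᵥ N *ᵥ v) := eq_neg_of_add_eq_zero_left h0
      rw [this]
      exact neg_nonpos.mpr hNvv
    exact (hM.dotProduct_mulVec_zero_iff v).mp hz
  set c₀ : ℂ := star ψ ⬝ᵥ M *ᵥ ψ with hc₀
  have hc₀nonneg : 0 ≤ c₀ := hM.dotProduct_mulVec_nonneg ψ
  -- M ψ = c₀ • ψ
  have hMψ : M *ᵥ ψ = c₀ • ψ := by
    set w : Fin n → ℂ := M *ᵥ ψ with hw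
    set v₀ : Fin n → ℂ := w - c₀ • ψ with hv₀def
    have hv₀ : star ψ ⬝ᵥ v₀ = 0 := by
      rw [hv₀def, dotProduct_sub, dotProduct_smul, smul_eq_mul, hψ, mul_one, hc₀, hw,
        sub_self]
    have hMv₀ : M *ᵥ v₀ = 0 := hMv v₀ hv₀
    have horth : star v₀ ⬝ᵥ w = 0 := by
      have : star v₀ ⬝ᵥ (M *ᵥ ψ) = star (star ψ ⬝ᵥ (M *ᵥ v₀)) := by
        rw [star_dotProduct]
        congr 1
        rw [star_mulVec, hM.1, ← dotProduct_mulVec]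
      rw [hw, this, hMv₀]
      simp
    have horth2 : star v₀ ⬝ᵥ ψ = 0 := by
      rw [star_dotProduct]
      rw [hv₀, star_zero]
    have hv₀0 : v₀ = 0 := by
      have : star v₀ ⬝ᵥ v₀ = 0 := by
        rw [hv₀def, dotProduct_sub, dotProduct_smul, smul_eq_mul]
        rw [← hv₀def, horth, horth2, mul_zero, sub_zero]
      exact dotProduct_star_self_eq_zero.mp this
    have : w - c₀ • ψ = 0 := hv₀0
    rw [hw] at this
    linear_combination (norm := module) this
  refine ⟨c₀.re, ?_, ?_⟩
  · exact (Complex.le_def.mp hc₀nonneg).1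
  have hc₀re : (c₀.re : ℂ) = c₀ := by
    exact Complex.ext rfl (by simpa using (Complex.le_def.mp hc₀nonneg).2)
  ext i j
  have hv : star ψ ⬝ᵥ (Pi.single j 1 - star (ψ j) • ψ) = 0 := by
    rw [dotProduct_sub, dotProduct_single, dotProduct_smul, smul_eq_mul, hψ, mul_one,
      mul_one, Pi.star_apply, sub_self]
  have h0 := hMv _ hv
  rw [mulVec_sub, mulVec_smul, hMψ, sub_eq_zero] at h0
  have h1 : (M *ᵥ Pi.single j 1) i = star (ψ j) • (c₀ • ψ) i := congrFun h0 i
  rw [mulVec_single_one] at h1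
  simp only [col_apply, Pi.smul_apply, smul_eq_mul, mul_one] at h1
  rw [h1]
  simp only [Matrix.smul_apply, proj, of_apply, smul_eq_mul, hc₀re, Complex.star_def]
  ring

/-- an inflexible assemblage of pure states is an extreme point of
the set of no-signaling assemblages. -/
theorem inflexible_is_extreme {n : ℕ} {A X : Type*} [Fintype A]
    (p : A → X → ℝ) (ψ : A → X → (Fin n → ℂ))
    (hp : ∀ a x, 0 ≤ p a x)
    (hψ : ∀ a x, ∑ i, (starRingEnd ℂ) (ψ a x i) * ψ a x i = 1)
    (hNS : IsNSA (fun a x => (p a x : ℂ) • proj (ψ a x)))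
    (hinflex : ∀ q : A → X → ℝ, (∀ a x, 0 ≤ q a x) →
      (∀ a x, p a x = 0 → q a x = 0) →
      IsNSA (fun a x => (q a x : ℂ) • proj (ψ a x)) →
      ∀ a x, (q a x : ℂ) • proj (ψ a x) = (p a x : ℂ) • proj (ψ a x)) :
    ∀ (σ₁ σ₂ : A → X → Matrix (Fin n) (Fin n) ℂ), IsNSA σ₁ → IsNSA σ₂ →
      ∀ t : ℝ, 0 < t → t < 1 →
      (∀ a x, (p a x : ℂ) • proj (ψ a x) =
        (t : ℂ) • σ₁ a x + ((1 - t : ℝ) : ℂ) • σ₂ a x) →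
      (∀ a x, σ₁ a x = (p a x : ℂ) • proj (ψ a x)) ∧
      (∀ a x, σ₂ a x = (p a x : ℂ) • proj (ψ a x)) := by
  intro σ₁ σ₂ h₁ h₂ t ht0 ht1 hdec
  have hψ' : ∀ a x, star (ψ a x) ⬝ᵥ ψ a x = 1 := by
    intro a x
    simpa [dotProduct, Complex.star_def] using hψ a x
  have htr : ∀ a x, (proj (ψ a x)).trace = 1 := fun a x => trace_proj _ (hψ a x)
  have ht0' : (0:ℝ) ≤ t := le_of_lt ht0
  have ht1' : (0:ℝ) ≤ 1 - t := by linarith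
  -- each σᵢ is a multiple of the projection
  have key1 : ∀ a x, ∃ q : ℝ, 0 ≤ q ∧ σ₁ a x = (q : ℂ) • proj (ψ a x) := by
    intro a x
    obtain ⟨r, hr0, hr⟩ := rankone_part (ψ a x) (hψ' a x)
      (psd_smul (h₁.1 a x) ht0') (psd_smul (h₂.1 a x) ht1')
      (p a x : ℂ) (hdec a x).symm
    refine ⟨r / t, div_nonneg hr0 ht0', ?_⟩
    have ht0c : (t:ℂ) ≠ 0 := by exact_mod_cast ne_of_gt ht0
    have := congrArg (fun M => (t:ℂ)⁻¹ • M) hr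
    simp only [smul_smul, inv_mul_cancel₀ ht0c, one_smul] at this
    rw [this]
    congr 1
    push_cast
    ring
  have key2 : ∀ a x, ∃ q : ℝ, 0 ≤ q ∧ σ₂ a x = (q : ℂ) • proj (ψ a x) := by
    intro a x
    have h' : ((1 - t : ℝ) : ℂ) • σ₂ a x + (t : ℂ) • σ₁ a x = (p a x : ℂ) • proj (ψ a x) := by
      rw [add_comm]; exact (hdec a x).symm
    obtain ⟨r, hr0, hr⟩ := rankone_part (ψ a x) (hψ' a x)
      (psd_smul (h₂.1 a x) ht1') (psd_smul (h₁.1 a x) ht0')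
      (p a x : ℂ) h'
    have h1t : (0:ℝ) < 1 - t := by linarith
    refine ⟨r / (1 - t), div_nonneg hr0 (le_of_lt h1t), ?_⟩
    have ht0c : ((1 - t : ℝ):ℂ) ≠ 0 := by exact_mod_cast ne_of_gt h1t
    have := congrArg (fun M => ((1 - t:ℝ):ℂ)⁻¹ • M) hr
    simp only [smul_smul, inv_mul_cancel₀ ht0c, one_smul] at this
    rw [this]
    congr 1
    push_cast
    ring
  choose q₁ hq₁0 hq₁ using key1
  choose q₂ hq₂0 hq₂ using key2
  -- traces
  have htrσ : ∀ a x, p a x = t * q₁ a x + (1 - t) * q₂ a x := by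
    intro a x
    have := congrArg Matrix.trace (hdec a x)
    rw [trace_smul, trace_add, trace_smul, trace_smul, htr a x, hq₁ a x, hq₂ a x,
      trace_smul, trace_smul, htr a x] at this
    simp only [smul_eq_mul, mul_one] at this
    exact_mod_cast this
  have hzero : ∀ a x, p a x = 0 → q₁ a x = 0 ∧ q₂ a x = 0 := by
    intro a x hpa
    have := htrσ a x
    rw [hpa] at this
    constructor <;> nlinarith [hq₁0 a x, hq₂0 a x, mul_nonneg ht0' (hq₁0 a x),
      mul_nonneg ht1' (hq₂0 a x)]
  have hNSA1 : IsNSA (fun a x => (q₁ a x : ℂ) • proj (ψ a x)) := by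
    have : (fun a x => (q₁ a x : ℂ) • proj (ψ a x)) = σ₁ :=
      funext fun a => funext fun x => (hq₁ a x).symm
    rw [this]; exact h₁
  have hNSA2 : IsNSA (fun a x => (q₂ a x : ℂ) • proj (ψ a x)) := by
    have : (fun a x => (q₂ a x : ℂ) • proj (ψ a x)) = σ₂ :=
      funext fun a => funext fun x => (hq₂ a x).symm
    rw [this]; exact h₂
  have hfix1 := hinflex q₁ hq₁0 (fun a x h => (hzero a x h).1) hNSA1
  have hfix2 := hinflex q₂ hq₂0 (fun a x h => (hzero a x h).2) hNSA2
  exact ⟨fun a x => (hq₁ a x).trans (hfix1 a x),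
         fun a x => (hq₂ a x).trans (hfix2 a x)⟩
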